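/- arXiv:2307.11127 — 2 statements merged into one kernel-verified Lean document; each statement's English description precedes it below -/
import Mathlib

section
/- Consider the linear regression model Y0 = Σ_j w*_j Y_j + ν where ν = ε_0 − Σ_j w*_j ε_j, with ε_j = Y_j − E[Y_j], the ε_j mutually uncorrelated, Var(ε_j) = σ_j² > 0, and ε_0 uncorrelated with each ε_j. Then for any j with w*_j ≠ 0, E[ν Y_j] = −w*_j σ_j² ≠ 0; that is, the regressor Y_j is correlated with the error term (implicit endogeneity). -/
open MeasureTheory ProbabilityTheory


private lemma l2_mul_integrable {Ω : Type*} [MeasureSpace Ω] {f g : Ω → ℝ}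
    (hf : MemLp f 2 (ℙ : Measure Ω)) (hg : MemLp g 2 (ℙ : Measure Ω)) :
    Integrable (fun ω => f ω * g ω) ℙ := by
  have h := hg.smul (φ := f) hf (r := 1)
  rw [memLp_one_iff_integrable] at h
  simpa [Pi.smul_apply, smul_eq_mul, Pi.mul_def] using h

/-- implicit endogeneity — the regressor is correlated with the error term. -/
theorem implicit_endogeneity
    {Ω : Type*} [MeasureSpace Ω] [IsProbabilityMeasure (ℙ : Measure Ω)]
    (J : ℕ) (Y0 : Ω → ℝ) (Y : Fin J → Ω → ℝ)
    (hY0L2 : MemLp Y0 2 (ℙ : Measure Ω)) (hYL2 : ∀ j, MemLp (Y j) 2 (ℙ : Measure Ω))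
    (w : Fin J → ℝ) (σ2 : Fin J → ℝ)
    (ε0 : Ω → ℝ) (ε : Fin J → Ω → ℝ)
    (hε0 : ε0 = fun ω => Y0 ω - ∫ ω', Y0 ω')
    (hε : ∀ j, ε j = fun ω => Y j ω - ∫ ω', Y j ω')
    (hlin : ∫ ω, Y0 ω = ∑ j, w j * ∫ ω, Y j ω)
    (huncorr : ∀ i j, i ≠ j → ∫ ω, ε i ω * ε j ω = 0)
    (hvar : ∀ j, ∫ ω, (ε j ω) ^ 2 = σ2 j)
    (hvar_pos : ∀ j, 0 < σ2 j)
    (h0uncorr : ∀ j, ∫ ω, ε0 ω * ε j ω = 0)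
    (ν : Ω → ℝ) (hν : ν = fun ω => ε0 ω - ∑ j, w j * ε j ω) :
    ∀ j, w j ≠ 0 →
      (∫ ω, ν ω * Y j ω) = -(w j) * σ2 j ∧ (∫ ω, ν ω * Y j ω) ≠ 0 := by
  intro j hwj
  have hεL2 : ∀ i, MemLp (ε i) 2 (ℙ : Measure Ω) := fun i => by
    rw [hε i]; exact (hYL2 i).sub (memLp_const _)
  have hε0L2 : MemLp ε0 2 (ℙ : Measure Ω) := by
    rw [hε0]; exact hY0L2.sub (memLp_const _)
  have hεint : ∀ i, Integrable (ε i) ℙ := fun i => (hεL2 i).integrable one_le_two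
  have hmul : ∀ i k, Integrable (fun ω => ε i ω * ε k ω) ℙ :=
    fun i k => l2_mul_integrable (hεL2 i) (hεL2 k)
  have h0mul : ∀ k, Integrable (fun ω => ε0 ω * ε k ω) ℙ :=
    fun k => l2_mul_integrable hε0L2 (hεL2 k)
  -- mean zero of each ε
  have hmean : ∀ i, ∫ ω, ε i ω = 0 := by
    intro i
    rw [hε i]
    rw [integral_sub ((hYL2 i).integrable one_le_two) (integrable_const _)]
    simp
  have hmean0 : ∫ ω, ε0 ω = 0 := by
    rw [hε0]
    rw [integral_sub (hY0L2.integrable one_le_two) (integrable_const _)]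
    simp
  -- ν is integrable
  have hνint : Integrable ν ℙ := by
    rw [hν]
    exact ((hε0L2.integrable one_le_two).sub
      (integrable_finset_sum _ fun i _ => (hεint i).const_mul (w i)))
  have hνε : Integrable (fun ω => ν ω * ε j ω) ℙ := by
    have : MemLp ν 2 (ℙ : Measure Ω) := by
      rw [hν]
      have hs : MemLp (fun ω => ∑ i, w i * ε i ω) 2 (ℙ : Measure Ω) := by
        have := memLp_finset_sum' (μ := (ℙ : Measure Ω)) (p := 2) Finset.univ
          (fun i (_ : i ∈ Finset.univ) => (hεL2 i).const_mul (w i))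
        have heq : (fun ω => ∑ i, w i * ε i ω) = ∑ i : Fin J, fun x => w i * ε i x := by
          funext ω; simp
        rw [heq]; exact this
      exact hε0L2.sub hs
    exact l2_mul_integrable this (hεL2 j)
  -- key: ∫ ν ε_j = -(w j) * σ2 j
  have key : (∫ ω, ν ω * ε j ω) = -(w j) * σ2 j := by
    have heq : (fun ω => ν ω * ε j ω)
        = fun ω => ε0 ω * ε j ω - ∑ i, w i * (ε i ω * ε j ω) := by
      funext ω
      rw [hν]
      simp [sub_mul, Finset.sum_mul, mul_assoc]
    rw [heq, integral_sub (h0mul j)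
      (integrable_finset_sum _ fun i _ => ((hmul i j).const_mul (w i)))]
    rw [h0uncorr j, integral_finset_sum _ (fun i _ => (hmul i j).const_mul (w i))]
    have hsum : (∑ i, ∫ ω, w i * (ε i ω * ε j ω)) = w j * σ2 j := by
      rw [Finset.sum_eq_single j]
      · rw [integral_const_mul, ← hvar j]
        congr 1
        exact integral_congr_ae (Filter.Eventually.of_forall fun ω => by ring)
      · intro i _ hij
        rw [integral_const_mul, huncorr i j hij, mul_zero]
      · simp
    rw [hsum]; ring
  -- ∫ ν = 0
  have hνmean : ∫ ω, ν ω = 0 := by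
    rw [hν]
    rw [integral_sub (hε0L2.integrable one_le_two)
      (integrable_finset_sum _ fun i _ => (hεint i).const_mul (w i))]
    rw [hmean0, integral_finset_sum _ (fun i _ => (hεint i).const_mul (w i))]
    simp [integral_const_mul, hmean]
  -- final computation
  have hfinal : (∫ ω, ν ω * Y j ω) = -(w j) * σ2 j := by
    have heq : (fun ω => ν ω * Y j ω)
        = fun ω => ν ω * ε j ω + (∫ ω', Y j ω') * ν ω := by
      funext ω
      have : Y j ω = ε j ω + ∫ ω', Y j ω' := by rw [hε j]; ring
      rw [this]; ring
    rw [heq, integral_add hνε (hνint.const_mul _), key, integral_const_mul, hνmean]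
    ring
  refine ⟨hfinal, ?_⟩
  rw [hfinal]
  exact mul_ne_zero (neg_ne_zero.mpr hwj) (hvar_pos j).ne'
end

section
/- Under the measurement-error setup, the probability limit of the unconstrained least-squares estimator of the synthetic control weights equals w* − (Q* + Σ)^{-1} Σ w*, where Q* and Σ are the diagonal matrices of second moments of the signals and the error variances respectively; in particular the least-squares estimator is asymptotically biased whenever Σ w* ≠ 0. -/
set_option linter.unusedSectionVars false
set_option maxHeartbeats 1000000

open MeasureTheory ProbabilityTheory Filter

/-- Convergence in probability to a constant, for metric-space-valued random elements. -/
def TendstoInProb {Ω : Type*} [MeasureSpace Ω] {E : Type*} [PseudoMetricSpace E]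
    (X : ℕ → Ω → E) (c : E) : Prop :=
  ∀ δ > (0 : ℝ), Tendsto (fun n => (ℙ {ω | δ ≤ dist (X n ω) c}).toReal) atTop (nhds 0)

section Helpers
variable {Ω : Type*} [MeasureSpace Ω] [IsProbabilityMeasure (ℙ : Measure Ω)]

lemma prob_tendsto_zero_of_subset {s : ℕ → Set Ω} {ι : Type*} [Fintype ι] (F : ι → ℕ → Set Ω)
    (hsub : ∀ n, s n ⊆ ⋃ i ∈ Finset.univ, F i n)
    (hF : ∀ i, Tendsto (fun n => (ℙ (F i n)).toReal) atTop (nhds 0)) :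
    Tendsto (fun n => (ℙ (s n)).toReal) atTop (nhds 0) := by
  have hsum : Tendsto (fun n => ∑ i : ι, (ℙ (F i n)).toReal) atTop (nhds 0) := by
    have := tendsto_finset_sum (Finset.univ : Finset ι) (fun i _ => hF i)
    simpa using this
  refine squeeze_zero (fun n => ENNReal.toReal_nonneg) (fun n => ?_) hsum
  have h1 : ℙ (s n) ≤ ∑ i : ι, ℙ (F i n) :=
    (measure_mono (hsub n)).trans (measure_biUnion_finset_le _ _)
  have h2 : (∑ i : ι, ℙ (F i n)) ≠ ⊤ := ENNReal.sum_ne_top.2 fun i _ => measure_ne_top _ _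
  calc (ℙ (s n)).toReal ≤ (∑ i : ι, ℙ (F i n)).toReal := ENNReal.toReal_mono h2 h1
    _ = ∑ i : ι, (ℙ (F i n)).toReal := ENNReal.toReal_sum fun i _ => measure_ne_top _ _

lemma tip_of_tendsto {f : ℕ → ℝ} {a : ℝ} (h : Tendsto f atTop (nhds a)) :
    TendstoInProb (fun n (_ : Ω) => f n) a := by
  intro δ hδ
  have hev : ∀ᶠ n in atTop, dist (f n) a < δ := (Metric.tendsto_nhds.1 h) δ hδ
  have : ∀ᶠ n in atTop, (ℙ {ω : Ω | δ ≤ dist (f n) a}).toReal = 0 := by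
    filter_upwards [hev] with n hn
    have : {ω : Ω | δ ≤ dist (f n) a} = ∅ := by
      ext ω; simp only [Set.mem_setOf_eq, Set.mem_empty_iff_false, iff_false]; linarith
    simp [this]
  exact tendsto_const_nhds.congr' (by filter_upwards [this] with n hn using hn.symm)

lemma tipR_congr {E : Type*} [PseudoMetricSpace E] {X Y : ℕ → Ω → E} {a : E}
    (h : ∀ n ω, X n ω = Y n ω) (hX : TendstoInProb X a) : TendstoInProb Y a := by
  have hxy : X = Y := funext fun n => funext fun ω => h n ω
  rwa [hxy] at hX

lemma tipR_add {X Y : ℕ → Ω → ℝ} {a b : ℝ} (hX : TendstoInProb X a) (hY : TendstoInProb Y b) :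
    TendstoInProb (fun n ω => X n ω + Y n ω) (a + b) := by
  intro δ hδ
  refine prob_tendsto_zero_of_subset (ι := Bool)
    (F := fun i n => if i then {ω | δ/2 ≤ dist (X n ω) a} else {ω | δ/2 ≤ dist (Y n ω) b})
    (fun n ω hω => ?_) (fun i => ?_)
  · simp only [Set.mem_setOf_eq] at hω
    by_contra hc
    simp only [Finset.mem_univ, Set.mem_iUnion, Bool.exists_bool, Set.mem_setOf_eq] at hc
    push_neg at hc
    obtain ⟨h1, h2⟩ := hc
    have h1' := h1 trivial
    have h2' := h2 trivial
    simp only [Bool.false_eq_true, if_true, if_false, not_le, Set.mem_setOf_eq,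
      ite_true, ite_false] at h1' h2'
    have := dist_add_add_le (X n ω) (Y n ω) a b
    linarith
  · cases i
    · simpa using hY (δ/2) (by linarith)
    · simpa using hX (δ/2) (by linarith)

lemma tipR_const_mul {X : ℕ → Ω → ℝ} {a : ℝ} (r : ℝ) (hX : TendstoInProb X a) :
    TendstoInProb (fun n ω => r * X n ω) (r * a) := by
  intro δ hδ
  rcases eq_or_ne r 0 with rfl | hr
  · refine prob_tendsto_zero_of_subset (ι := Empty) (F := fun i n => ∅)
      (fun n ω hω => ?_) (fun i => i.elim)
    simp only [Set.mem_setOf_eq, zero_mul, dist_self] at hω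
    linarith
  · have hrpos : 0 < |r| := abs_pos.2 hr
    refine prob_tendsto_zero_of_subset (ι := Unit)
      (F := fun _ n => {ω | δ/|r| ≤ dist (X n ω) a}) (fun n ω hω => ?_) (fun _ => ?_)
    · simp only [Set.mem_setOf_eq] at hω
      have : dist (r * X n ω) (r * a) = |r| * dist (X n ω) a := by
        simp [Real.dist_eq, ← mul_sub, abs_mul]
      rw [this] at hω
      simp only [Finset.mem_univ, Set.mem_iUnion, Set.mem_setOf_eq]
      exact ⟨(), trivial, by rw [div_le_iff₀ hrpos]; linarith [mul_comm (|r|) (dist (X n ω) a)]⟩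
    · exact hX (δ/|r|) (div_pos hδ hrpos)

lemma tipR_sub {X Y : ℕ → Ω → ℝ} {a b : ℝ} (hX : TendstoInProb X a) (hY : TendstoInProb Y b) :
    TendstoInProb (fun n ω => X n ω - Y n ω) (a - b) := by
  have h := tipR_add hX (tipR_const_mul (-1) hY)
  have h2 : a + (-1) * b = a - b := by ring
  rw [h2] at h
  exact tipR_congr (fun n ω => by ring) h

lemma tipR_sum {ι : Type*} (s : Finset ι) (X : ι → ℕ → Ω → ℝ) (a : ι → ℝ)
    (h : ∀ i ∈ s, TendstoInProb (X i) (a i)) :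
    TendstoInProb (fun n ω => ∑ i ∈ s, X i n ω) (∑ i ∈ s, a i) := by
  classical
  induction s using Finset.induction_on with
  | empty => simpa using tip_of_tendsto (tendsto_const_nhds (x := (0:ℝ)))
  | insert i t hni ih =>
    simp only [Finset.sum_insert hni]
    exact tipR_add (h i (Finset.mem_insert_self i t))
      (ih fun j hj => h j (Finset.mem_insert_of_mem hj))

lemma keyzero {α β : ℝ} (hβ : 0 ≤ β) (h : ∀ s : ℝ, 0 ≤ β * s^2 + α * s) : α = 0 := by
  have key : ∀ s : ℝ, 0 < s → |α| ≤ β * s := by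
    intro s hs
    have h1 := h s
    have h2 := h (-s)
    rw [abs_le]
    constructor <;> nlinarith
  rcases eq_or_lt_of_le hβ with hβ0 | hβpos
  · have h1 := key 1 one_pos
    have h0 : |α| ≤ 0 := by rw [← hβ0] at h1; linarith
    exact abs_eq_zero.1 (le_antisymm h0 (abs_nonneg α))
  · by_contra hα
    have hpos : 0 < |α| := abs_pos.2 hα
    have hs : 0 < |α| / (2 * β) := by positivity
    have hk := key _ hs
    have heq : β * (|α| / (2 * β)) = |α| / 2 := by field_simp
    rw [heq] at hk
    linarith

lemma normal_eq {J : ℕ} (Y : Fin J → ℕ → Ω → ℝ) (Y0 : ℕ → Ω → ℝ) (T : ℕ) (ω : Ω)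
    (w0 : Fin J → ℝ)
    (hmin : IsMinOn (fun w : Fin J → ℝ =>
        (1 / (T : ℝ)) * ∑ t ∈ Finset.range T, (Y0 t ω - ∑ j, w j * Y j t ω) ^ 2)
        Set.univ w0) (j : Fin J) :
    (1 / (T : ℝ)) * ∑ t ∈ Finset.range T,
      (Y0 t ω - ∑ k, w0 k * Y k t ω) * Y j t ω = 0 := by
  set c : ℝ := 1 / (T : ℝ) with hc
  have hc0 : 0 ≤ c := by positivity
  set R : ℕ → ℝ := fun t => Y0 t ω - ∑ k, w0 k * Y k t ω with hR
  set α : ℝ := -2 * (c * ∑ t ∈ Finset.range T, R t * Y j t ω) with hα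
  set β : ℝ := c * ∑ t ∈ Finset.range T, (Y j t ω)^2 with hβdef
  have hβ : 0 ≤ β := mul_nonneg hc0 (Finset.sum_nonneg fun t _ => sq_nonneg _)
  have key : ∀ s : ℝ, 0 ≤ β * s^2 + α * s := by
    intro s
    have hle := hmin (Set.mem_univ (fun k => w0 k + s * (if k = j then 1 else 0)))
    simp only [Set.mem_setOf_eq] at hle
    have expand : ∀ t, Y0 t ω - ∑ k, (w0 k + s * (if k = j then 1 else 0)) * Y k t ω
        = R t - s * Y j t ω := by
      intro t
      rw [hR]
      simp only [add_mul, Finset.sum_add_distrib]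
      have : ∑ k, s * (if k = j then 1 else 0) * Y k t ω = s * Y j t ω := by
        rw [Finset.sum_eq_single j]
        · simp
        · intro k _ hk; simp [hk]
        · simp
      rw [this]; ring
    have hexp : (c * ∑ t ∈ Finset.range T,
        (Y0 t ω - ∑ k, (w0 k + s * (if k = j then 1 else 0)) * Y k t ω) ^ 2)
        = c * ∑ t ∈ Finset.range T, (R t)^2 + β * s^2 + α * s := by
      rw [hβdef, hα]
      have hco : ∀ t ∈ Finset.range T,
          (Y0 t ω - ∑ k, (w0 k + s * (if k = j then 1 else 0)) * Y k t ω) ^ 2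
          = (R t)^2 + (Y j t ω)^2 * s^2 + (-2 * (R t * Y j t ω)) * s := by
        intro t _
        rw [expand t]; ring
      rw [Finset.sum_congr rfl hco, Finset.sum_add_distrib, Finset.sum_add_distrib,
        ← Finset.sum_mul, ← Finset.sum_mul]
      have e3 : ∑ i ∈ Finset.range T, -2*(R i * Y j i ω)
          = -2 * ∑ i ∈ Finset.range T, R i * Y j i ω := by rw [Finset.mul_sum]
      rw [e3]; ring
    have hle' : c * ∑ t ∈ Finset.range T, (R t)^2 ≤
        c * ∑ t ∈ Finset.range T, (R t)^2 + β * s^2 + α * s := by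
      calc c * ∑ t ∈ Finset.range T, (R t)^2 ≤ _ := hle
        _ = _ := hexp
    linarith
  have hα0 : α = 0 := keyzero hβ key
  have hfin : c * ∑ t ∈ Finset.range T, R t * Y j t ω = 0 := by
    rw [hα] at hα0; linarith
  exact hfin

lemma swap_helper {J : ℕ} (c : ℝ) (T : ℕ) (w : Fin J → ℝ) (g : Fin J → ℕ → ℝ) :
    c * ∑ t ∈ Finset.range T, ∑ i, w i * g i t
      = ∑ i, w i * (c * ∑ t ∈ Finset.range T, g i t) := by
  rw [Finset.sum_comm, Finset.mul_sum]
  exact Finset.sum_congr rfl fun i _ => by rw [← Finset.mul_sum]; ring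

lemma split4 (c : ℝ) (T : ℕ) (f g h k l : ℕ → ℝ)
    (H : ∀ t ∈ Finset.range T, f t = g t + h t + k t + l t) :
    c * ∑ t ∈ Finset.range T, f t
      = c * ∑ t ∈ Finset.range T, g t + (c * ∑ t ∈ Finset.range T, h t
        + (c * ∑ t ∈ Finset.range T, k t + c * ∑ t ∈ Finset.range T, l t)) := by
  rw [Finset.sum_congr rfl H, Finset.sum_add_distrib, Finset.sum_add_distrib,
    Finset.sum_add_distrib]
  ring

end Helpers

/-- under the measurement-error setup, the unconstrained least-squares
estimator of the SC weights converges in probability to `w* − (Q* + Σ)⁻¹ Σ w*`, and it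
is asymptotically biased whenever `Σ w* ≠ 0`. -/
theorem ls_asymptotic_bias
    {Ω : Type*} [MeasureSpace Ω] [IsProbabilityMeasure (ℙ : Measure Ω)]
    (J : ℕ) (hJ : 1 ≤ J)
    (μ : Fin J → ℕ → ℝ)                    -- signals of the untreated units
    (e : Fin J → ℕ → Ω → ℝ)               -- measurement errors of untreated units
    (e0 : ℕ → Ω → ℝ)                      -- error of the treated unit
    (wstar : Fin J → ℝ)
    (Y : Fin J → ℕ → Ω → ℝ) (Y0 : ℕ → Ω → ℝ)
    (hY : ∀ j t ω, Y j t ω = μ j t + e j t ω)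
    (hY0 : ∀ t ω, Y0 t ω = ∑ j, wstar j * μ j t + e0 t ω)
    (Qd Sd : Fin J → ℝ)
    -- second moments of the signals and asymptotic orthogonality across units
    (hQ : ∀ j, Tendsto (fun T0 : ℕ => (1 / (T0 : ℝ)) * ∑ t ∈ Finset.range T0, (μ j t) ^ 2)
        atTop (nhds (Qd j)))
    (hμorth : ∀ i j, i ≠ j →
      Tendsto (fun T0 : ℕ => (1 / (T0 : ℝ)) * ∑ t ∈ Finset.range T0, μ i t * μ j t)
        atTop (nhds 0))
    -- limiting error second moments: variances Sd on the diagonal, zero off-diagonal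
    (hSd : ∀ j, TendstoInProb
        (fun T0 ω => (1 / (T0 : ℝ)) * ∑ t ∈ Finset.range T0, (e j t ω) ^ 2) (Sd j))
    (heorth : ∀ i j, i ≠ j → TendstoInProb
        (fun T0 ω => (1 / (T0 : ℝ)) * ∑ t ∈ Finset.range T0, e i t ω * e j t ω) 0)
    -- signals and errors are asymptotically uncorrelated
    (hμe : ∀ i j, TendstoInProb
        (fun T0 ω => (1 / (T0 : ℝ)) * ∑ t ∈ Finset.range T0, μ i t * e j t ω) 0)
    (hμe0 : ∀ i, TendstoInProb
        (fun T0 ω => (1 / (T0 : ℝ)) * ∑ t ∈ Finset.range T0, μ i t * e0 t ω) 0)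
    (he0e : ∀ j, TendstoInProb
        (fun T0 ω => (1 / (T0 : ℝ)) * ∑ t ∈ Finset.range T0, e0 t ω * e j t ω) 0)
    -- invertibility of Q* + Σ
    (hinv : IsUnit (Matrix.diagonal Qd + Matrix.diagonal Sd))
    -- the unconstrained least-squares estimator
    (what : ℕ → Ω → Fin J → ℝ)
    (hmin : ∀ (T0 : ℕ) (ω : Ω), IsMinOn
        (fun w : Fin J → ℝ =>
          (1 / (T0 : ℝ)) * ∑ t ∈ Finset.range T0, (Y0 t ω - ∑ j, w j * Y j t ω) ^ 2)
        Set.univ (what T0 ω))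
    (wbar : Fin J → ℝ)
    (hwbar : wbar = wstar -
      ((Matrix.diagonal Qd + Matrix.diagonal Sd)⁻¹ * Matrix.diagonal Sd).mulVec wstar) :
    TendstoInProb what wbar ∧
      ((Matrix.diagonal Sd).mulVec wstar ≠ 0 → wbar ≠ wstar) := by
  classical
  have hJ0 : 0 < J := hJ
  haveI : Nonempty (Fin J) := Fin.pos_iff_nonempty.1 hJ0
  -- the diagonal entries
  set d : Fin J → ℝ := fun j => Qd j + Sd j with hd
  have hDdiag : Matrix.diagonal Qd + Matrix.diagonal Sd = Matrix.diagonal d := by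
    rw [Matrix.diagonal_add]
  have hdet : IsUnit (Matrix.diagonal Qd + Matrix.diagonal Sd).det :=
    (Matrix.isUnit_iff_isUnit_det _).1 hinv
  have hdj : ∀ j, d j ≠ 0 := by
    intro j hj
    have h1 : IsUnit (Matrix.diagonal d).det := hDdiag ▸ hdet
    rw [Matrix.det_diagonal, isUnit_iff_ne_zero] at h1
    exact h1 (Finset.prod_eq_zero (Finset.mem_univ j) hj)
  have hDinv : (Matrix.diagonal Qd + Matrix.diagonal Sd) *
      (Matrix.diagonal Qd + Matrix.diagonal Sd)⁻¹ = 1 :=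
    Matrix.mul_nonsing_inv _ hdet
  -- key identity : d j * wbar j = Qd j * wstar j
  have hDw : ∀ j, d j * wbar j = Qd j * wstar j := by
    intro j
    have h1 : (Matrix.diagonal Qd + Matrix.diagonal Sd).mulVec wbar
        = (Matrix.diagonal Qd + Matrix.diagonal Sd).mulVec wstar
          - (Matrix.diagonal Sd).mulVec wstar := by
      rw [hwbar, Matrix.mulVec_sub]
      congr 1
      rw [Matrix.mulVec_mulVec, ← Matrix.mul_assoc, hDinv, Matrix.one_mul]
    have h2 := congrFun h1 j
    rw [hDdiag] at h2
    simp only [Matrix.mulVec_diagonal, Pi.sub_apply] at h2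
    have hdj' : d j = Qd j + Sd j := rfl
    rw [h2]
    rw [hdj']; ring
  constructor
  · -- convergence part
    have hA : ∀ j k : Fin J, TendstoInProb
        (fun T ω => (1/(T:ℝ)) * ∑ t ∈ Finset.range T, Y j t ω * Y k t ω)
        (if j = k then d j else 0) := by
      intro j k
      have hdec : ∀ (T : ℕ) (ω : Ω), (1/(T:ℝ)) * ∑ t ∈ Finset.range T, Y j t ω * Y k t ω
          = (1/(T:ℝ)) * ∑ t ∈ Finset.range T, μ j t * μ k t
            + ((1/(T:ℝ)) * ∑ t ∈ Finset.range T, μ j t * e k t ω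
            + ((1/(T:ℝ)) * ∑ t ∈ Finset.range T, μ k t * e j t ω
            + (1/(T:ℝ)) * ∑ t ∈ Finset.range T, e j t ω * e k t ω)) := by
        intro T ω
        exact split4 _ _ _ _ _ _ _ (fun t _ => by rw [hY, hY]; ring)
      rcases eq_or_ne j k with rfl | hjk
      · have h1 : Tendsto (fun T : ℕ => (1/(T:ℝ)) * ∑ t ∈ Finset.range T, μ j t * μ j t)
            atTop (nhds (Qd j)) :=
          (hQ j).congr (fun T => by
            congr 1
            exact Finset.sum_congr rfl fun t _ => by rw [pow_two])
        have h4 : TendstoInProb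
            (fun T ω => (1/(T:ℝ)) * ∑ t ∈ Finset.range T, e j t ω * e j t ω) (Sd j) :=
          tipR_congr (fun T ω => by
            congr 1
            exact Finset.sum_congr rfl fun t _ => by rw [pow_two]) (hSd j)
        have hall := tipR_add (tip_of_tendsto (Ω := Ω) h1)
          (tipR_add (hμe j j) (tipR_add (hμe j j) h4))
        have heqv : Qd j + (0 + (0 + Sd j)) = if j = j then d j else 0 := by
          simp [hd]
        rw [heqv] at hall
        exact tipR_congr (fun T ω => (hdec T ω).symm) hall
      · have h1 : Tendsto (fun T : ℕ => (1/(T:ℝ)) * ∑ t ∈ Finset.range T, μ j t * μ k t)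
            atTop (nhds 0) := hμorth j k hjk
        have hall := tipR_add (tip_of_tendsto (Ω := Ω) h1)
          (tipR_add (hμe j k) (tipR_add (hμe k j) (heorth j k hjk)))
        have heqv : (0:ℝ) + (0 + (0 + 0)) = if j = k then d j else 0 := by
          simp [hjk]
        rw [heqv] at hall
        exact tipR_congr (fun T ω => (hdec T ω).symm) hall
    have hb : ∀ j : Fin J, TendstoInProb
        (fun T ω => (1/(T:ℝ)) * ∑ t ∈ Finset.range T, Y j t ω * Y0 t ω)
        (Qd j * wstar j) := by
      intro j
      have hdec : ∀ (T : ℕ) (ω : Ω), (1/(T:ℝ)) * ∑ t ∈ Finset.range T, Y j t ω * Y0 t ω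
          = (∑ i, wstar i * ((1/(T:ℝ)) * ∑ t ∈ Finset.range T, μ j t * μ i t))
            + ((1/(T:ℝ)) * ∑ t ∈ Finset.range T, μ j t * e0 t ω
            + ((∑ i, wstar i * ((1/(T:ℝ)) * ∑ t ∈ Finset.range T, μ i t * e j t ω))
            + (1/(T:ℝ)) * ∑ t ∈ Finset.range T, e0 t ω * e j t ω)) := by
        intro T ω
        rw [split4 (1/(T:ℝ)) T (fun t => Y j t ω * Y0 t ω)
          (fun t => ∑ i, wstar i * (μ j t * μ i t)) (fun t => μ j t * e0 t ω)
          (fun t => ∑ i, wstar i * (μ i t * e j t ω)) (fun t => e0 t ω * e j t ω) ?_,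
          swap_helper, swap_helper]
        intro t _
        rw [hY, hY0]
        have e1 : μ j t * ∑ i, wstar i * μ i t = ∑ i, wstar i * (μ j t * μ i t) := by
          rw [Finset.mul_sum]; exact Finset.sum_congr rfl fun i _ => by ring
        have e2 : e j t ω * ∑ i, wstar i * μ i t = ∑ i, wstar i * (μ i t * e j t ω) := by
          rw [Finset.mul_sum]; exact Finset.sum_congr rfl fun i _ => by ring
        rw [add_mul, mul_add, mul_add, e1, e2]; ring
      have h1 : Tendsto (fun T : ℕ =>
          ∑ i, wstar i * ((1/(T:ℝ)) * ∑ t ∈ Finset.range T, μ j t * μ i t))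
          atTop (nhds (∑ i, wstar i * (if i = j then Qd j else 0))) := by
        apply tendsto_finset_sum
        intro i _
        apply Tendsto.const_mul
        rcases eq_or_ne i j with rfl | hij
        · rw [if_pos rfl]
          exact (hQ i).congr (fun T => by
            congr 1
            exact Finset.sum_congr rfl fun t _ => by rw [pow_two])
        · rw [if_neg hij]; exact hμorth j i (Ne.symm hij)
      have h3 : TendstoInProb (fun T ω =>
          ∑ i, wstar i * ((1/(T:ℝ)) * ∑ t ∈ Finset.range T, μ i t * e j t ω))
          (∑ i : Fin J, wstar i * 0) :=
        tipR_sum Finset.univ _ _ (fun i _ => tipR_const_mul (wstar i) (hμe i j))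
      have hall := tipR_add (tip_of_tendsto h1) (tipR_add (hμe0 j) (tipR_add h3 (he0e j)))
      have heqv : (∑ i, wstar i * (if i = j then Qd j else 0))
          + (0 + ((∑ i : Fin J, wstar i * 0) + 0)) = Qd j * wstar j := by
        simp [Finset.sum_ite_eq', mul_comm]
      rw [heqv] at hall
      exact tipR_congr (fun T ω => (hdec T ω).symm) hall
    have hcv : ∀ j : Fin J, TendstoInProb
        (fun T ω => (1/(T:ℝ)) * ∑ t ∈ Finset.range T, Y j t ω * Y0 t ω
          - ∑ k, wbar k * ((1/(T:ℝ)) * ∑ t ∈ Finset.range T, Y j t ω * Y k t ω)) 0 := by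
      intro j
      have h2 : TendstoInProb (fun T ω =>
          ∑ k, wbar k * ((1/(T:ℝ)) * ∑ t ∈ Finset.range T, Y j t ω * Y k t ω))
          (∑ k, wbar k * (if j = k then d j else 0)) :=
        tipR_sum Finset.univ _ _ (fun k _ => tipR_const_mul (wbar k) (hA j k))
      have hall := tipR_sub (hb j) h2
      have heqv : Qd j * wstar j - (∑ k, wbar k * (if j = k then d j else 0)) = 0 := by
        have hsum : (∑ k, wbar k * if j = k then d j else 0) = wbar j * d j := by
          rw [Finset.sum_eq_single j]
          · simp
          · intro k _ hk; rw [if_neg (fun h => hk h.symm), mul_zero]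
          · simp
        rw [hsum]
        have := hDw j
        linarith
      rw [heqv] at hall
      exact hall
    have hNE : ∀ (T : ℕ) (ω : Ω) (j : Fin J),
        ∑ k, what T ω k * ((1/(T:ℝ)) * ∑ t ∈ Finset.range T, Y j t ω * Y k t ω)
          = (1/(T:ℝ)) * ∑ t ∈ Finset.range T, Y j t ω * Y0 t ω := by
      intro T ω j
      have h0 := normal_eq Y Y0 T ω (what T ω) (hmin T ω) j
      have hsplit : (1/(T:ℝ)) * ∑ t ∈ Finset.range T,
          (Y0 t ω - ∑ k, what T ω k * Y k t ω) * Y j t ω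
          = (1/(T:ℝ)) * ∑ t ∈ Finset.range T, Y j t ω * Y0 t ω
            - ∑ k, what T ω k * ((1/(T:ℝ)) * ∑ t ∈ Finset.range T, Y j t ω * Y k t ω) := by
        have hper : ∀ t ∈ Finset.range T, (Y0 t ω - ∑ k, what T ω k * Y k t ω) * Y j t ω
            = Y j t ω * Y0 t ω - ∑ k, what T ω k * (Y j t ω * Y k t ω) := by
          intro t _
          rw [sub_mul, Finset.sum_mul]
          congr 1
          · ring
          · exact Finset.sum_congr rfl fun k _ => by ring
        rw [Finset.sum_congr rfl hper, Finset.sum_sub_distrib, mul_sub, swap_helper]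
      rw [hsplit] at h0
      linarith
    -- final assembly
    intro δ hδ
    set dmin : ℝ := Finset.univ.inf' Finset.univ_nonempty (fun j => |d j|) with hdmin
    have hdminpos : 0 < dmin := by
      rw [hdmin, Finset.lt_inf'_iff]
      exact fun j _ => abs_pos.2 (hdj j)
    have hdminle : ∀ j, dmin ≤ |d j| := fun j => Finset.inf'_le _ (Finset.mem_univ j)
    have hJR : (0:ℝ) < (J:ℝ) := by exact_mod_cast hJ0
    set ε1 : ℝ := dmin / (2 * J) with hε1
    set ε2 : ℝ := δ * dmin / 4 with hε2
    have hε1pos : 0 < ε1 := by rw [hε1]; positivity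
    have hε2pos : 0 < ε2 := by rw [hε2]; positivity
    refine prob_tendsto_zero_of_subset (ι := (Fin J × Fin J) ⊕ Fin J)
      (F := Sum.elim
        (fun p n => {ω | ε1 ≤ dist
          ((1/(n:ℝ)) * ∑ t ∈ Finset.range n, Y p.1 t ω * Y p.2 t ω)
          (if p.1 = p.2 then d p.1 else 0)})
        (fun j n => {ω | ε2 ≤ dist
          ((1/(n:ℝ)) * ∑ t ∈ Finset.range n, Y j t ω * Y0 t ω
            - ∑ k, wbar k * ((1/(n:ℝ)) * ∑ t ∈ Finset.range n, Y j t ω * Y k t ω)) 0}))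
      (fun n ω hω => ?_) (fun i => ?_)
    swap
    · rcases i with ⟨j,k⟩ | j
      · exact hA j k ε1 hε1pos
      · exact hcv j ε2 hε2pos
    · simp only [Set.mem_setOf_eq] at hω
      by_cases hc1 : ∃ p : Fin J × Fin J, ε1 ≤ dist
          ((1/(n:ℝ)) * ∑ t ∈ Finset.range n, Y p.1 t ω * Y p.2 t ω)
          (if p.1 = p.2 then d p.1 else 0)
      · obtain ⟨p, hp⟩ := hc1
        exact Set.mem_biUnion (Finset.mem_univ (Sum.inl p)) hp
      by_cases hc2 : ∃ j : Fin J, ε2 ≤ dist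
          ((1/(n:ℝ)) * ∑ t ∈ Finset.range n, Y j t ω * Y0 t ω
            - ∑ k, wbar k * ((1/(n:ℝ)) * ∑ t ∈ Finset.range n, Y j t ω * Y k t ω)) 0
      · obtain ⟨j, hj⟩ := hc2
        exact Set.mem_biUnion (Finset.mem_univ (Sum.inr j)) hj
      exfalso
      push_neg at hc1 hc2
      have hAb : ∀ j k : Fin J, dist
          ((1/(n:ℝ)) * ∑ t ∈ Finset.range n, Y j t ω * Y k t ω)
          (if j = k then d j else 0) < ε1 := fun j k => hc1 (j, k)
      have hCb : ∀ j : Fin J, dist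
          ((1/(n:ℝ)) * ∑ t ∈ Finset.range n, Y j t ω * Y0 t ω
            - ∑ k, wbar k * ((1/(n:ℝ)) * ∑ t ∈ Finset.range n, Y j t ω * Y k t ω)) 0 < ε2 :=
        hc2
      set x : Fin J → ℝ := fun k => what n ω k - wbar k with hx
      have hxeq : ∀ j, ∑ k, x k * ((1/(n:ℝ)) * ∑ t ∈ Finset.range n, Y j t ω * Y k t ω)
          = (1/(n:ℝ)) * ∑ t ∈ Finset.range n, Y j t ω * Y0 t ω
            - ∑ k, wbar k * ((1/(n:ℝ)) * ∑ t ∈ Finset.range n, Y j t ω * Y k t ω) := by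
        intro j
        rw [← hNE n ω j, ← Finset.sum_sub_distrib]
        exact Finset.sum_congr rfl fun k _ => by simp only [hx]; ring
      obtain ⟨j0, _, hj0⟩ := Finset.exists_mem_eq_sup' (Finset.univ_nonempty (α := Fin J))
        (fun k => |x k|)
      set M : ℝ := Finset.univ.sup' Finset.univ_nonempty (fun k => |x k|) with hM
      have hMj0 : M = |x j0| := hj0
      have hMnonneg : 0 ≤ M := by rw [hMj0]; exact abs_nonneg _
      have hxk : ∀ k, |x k| ≤ M := fun k => Finset.le_sup' (fun k => |x k|) (Finset.mem_univ k)
      have hdx : d j0 * x j0 = ∑ k, (if j0 = k then d j0 else 0) * x k := by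
        rw [Finset.sum_eq_single j0]
        · simp
        · intro k _ hk; rw [if_neg (fun h => hk h.symm), zero_mul]
        · simp
      have h2 : d j0 * x j0
          = (∑ k, ((if j0 = k then d j0 else 0)
              - (1/(n:ℝ)) * ∑ t ∈ Finset.range n, Y j0 t ω * Y k t ω) * x k)
            + ((1/(n:ℝ)) * ∑ t ∈ Finset.range n, Y j0 t ω * Y0 t ω
              - ∑ k, wbar k * ((1/(n:ℝ)) * ∑ t ∈ Finset.range n, Y j0 t ω * Y k t ω)) := by
        have hsplit2 : ∑ k, ((if j0 = k then d j0 else 0)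
            - (1/(n:ℝ)) * ∑ t ∈ Finset.range n, Y j0 t ω * Y k t ω) * x k
            = ∑ k, (if j0 = k then d j0 else 0) * x k
              - ∑ k, ((1/(n:ℝ)) * ∑ t ∈ Finset.range n, Y j0 t ω * Y k t ω) * x k := by
          rw [← Finset.sum_sub_distrib]
          exact Finset.sum_congr rfl fun k _ => by ring
        have hAx : ∑ k, ((1/(n:ℝ)) * ∑ t ∈ Finset.range n, Y j0 t ω * Y k t ω) * x k
            = ∑ k, x k * ((1/(n:ℝ)) * ∑ t ∈ Finset.range n, Y j0 t ω * Y k t ω) :=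
          Finset.sum_congr rfl fun k _ => by ring
        rw [hsplit2, hAx, hxeq j0, ← hdx]
        ring
      have hkey : |d j0| * |x j0| ≤ (J : ℝ) * (ε1 * M) + ε2 := by
        rw [← abs_mul, h2]
        calc |_ + _| ≤ |∑ k, ((if j0 = k then d j0 else 0)
              - (1/(n:ℝ)) * ∑ t ∈ Finset.range n, Y j0 t ω * Y k t ω) * x k|
            + |(1/(n:ℝ)) * ∑ t ∈ Finset.range n, Y j0 t ω * Y0 t ω
              - ∑ k, wbar k * ((1/(n:ℝ)) * ∑ t ∈ Finset.range n, Y j0 t ω * Y k t ω)| :=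
            abs_add_le _ _
          _ ≤ (∑ k : Fin J, ε1 * M) + ε2 := by
            apply add_le_add
            · refine (Finset.abs_sum_le_sum_abs _ _).trans (Finset.sum_le_sum fun k _ => ?_)
              rw [abs_mul]
              have hd1 : |(if j0 = k then d j0 else 0)
                  - (1/(n:ℝ)) * ∑ t ∈ Finset.range n, Y j0 t ω * Y k t ω| ≤ ε1 := by
                have := hAb j0 k
                rw [Real.dist_eq] at this
                rw [abs_sub_comm]
                linarith
              exact mul_le_mul hd1 (hxk k) (abs_nonneg _) (le_of_lt hε1pos)
            · have := hCb j0
              rw [Real.dist_eq, sub_zero] at this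
              linarith
          _ = (J : ℝ) * (ε1 * M) + ε2 := by
            rw [Finset.sum_const, Finset.card_univ, Fintype.card_fin, nsmul_eq_mul]
      have hMd : dmin * M ≤ (J:ℝ) * (ε1 * M) + ε2 := by
        calc dmin * M = dmin * |x j0| := by rw [hMj0]
          _ ≤ |d j0| * |x j0| := mul_le_mul_of_nonneg_right (hdminle j0) (abs_nonneg _)
          _ ≤ _ := hkey
      have hJε1 : (J:ℝ) * ε1 = dmin / 2 := by
        rw [hε1]
        field_simp
      have hMle : M ≤ δ/2 := by
        rw [← mul_assoc, hJε1, hε2] at hMd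
        nlinarith
      have hdist : dist (what n ω) wbar ≤ δ/2 := by
        refine (dist_pi_le_iff (by linarith)).2 fun b => ?_
        rw [Real.dist_eq]
        calc |what n ω b - wbar b| = |x b| := rfl
          _ ≤ M := hxk b
          _ ≤ δ/2 := hMle
      linarith
  · -- bias part
    intro hS heq
    have h0 : ((Matrix.diagonal Qd + Matrix.diagonal Sd)⁻¹ *
        Matrix.diagonal Sd).mulVec wstar = 0 := by
      have := hwbar
      rw [heq] at this
      have h3 : wstar - ((Matrix.diagonal Qd + Matrix.diagonal Sd)⁻¹ *
          Matrix.diagonal Sd).mulVec wstar = wstar := this.symm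
      rwa [sub_eq_self] at h3
    apply hS
    calc (Matrix.diagonal Sd).mulVec wstar
        = (((Matrix.diagonal Qd + Matrix.diagonal Sd) *
            (Matrix.diagonal Qd + Matrix.diagonal Sd)⁻¹) * Matrix.diagonal Sd).mulVec wstar := by
          rw [hDinv, Matrix.one_mul]
      _ = (Matrix.diagonal Qd + Matrix.diagonal Sd).mulVec
            (((Matrix.diagonal Qd + Matrix.diagonal Sd)⁻¹ * Matrix.diagonal Sd).mulVec wstar) := by
          rw [Matrix.mulVec_mulVec, Matrix.mul_assoc]
      _ = 0 := by rw [h0, Matrix.mulVec_zero]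
end
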